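/- Let m ≥ 1, let f(x) = x^m + c_1 x^{m−1} + ⋯ + c_m be a monic polynomial with complex coefficients, and let r be the largest nonnegative real root of the polynomial x^m − |c_1| x^{m−1} − ⋯ − |c_m| (r = 0 if all c_i = 0). Then r ≤ λ(f)/(2^{1/m} − 1), where λ(f) is the maximum modulus of the complex roots of f. Equivalently, for the companion-form matrix F of f, λ(F̄) ≤ λ(F)/(2^{1/m} − 1). -/

import Mathlib

open Polynomial Finset


/-- Let `f(x) = x^m + c_1 x^{m-1} + ⋯ + c_m` be monic with complex
coefficients, let `λf` be the maximum modulus of its complex roots, and let `r` be the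
largest nonnegative real root of `x^m − |c_1| x^{m-1} − ⋯ − |c_m|`. Then
`r ≤ λf / (2^{1/m} − 1)`. (Equivalently, `λ(F̄) ≤ λ(F)/(2^{1/m} − 1)` for the
companion-form matrix `F` of `f`. Here `c : Fin m → ℂ` is 0-indexed.) -/
theorem abs_companion_spectralRadius_le (m : ℕ) (hm : 1 ≤ m) (c : Fin m → ℂ)
    (lamf : ℝ)
    (hlam_ub : ∀ z : ℂ, z ^ m + ∑ i : Fin m, c i * z ^ (m - 1 - (i : ℕ)) = 0 →
      ‖z‖ ≤ lamf)
    (hlam_ex : ∃ z : ℂ, z ^ m + ∑ i : Fin m, c i * z ^ (m - 1 - (i : ℕ)) = 0 ∧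
      ‖z‖ = lamf)
    (r : ℝ) (hr0 : 0 ≤ r)
    (hr_root : r ^ m = ∑ i : Fin m, ‖c i‖ * r ^ (m - 1 - (i : ℕ)))
    (hr_max : ∀ s : ℝ, 0 ≤ s →
      s ^ m = ∑ i : Fin m, ‖c i‖ * s ^ (m - 1 - (i : ℕ)) → s ≤ r) :
    r ≤ lamf / ((2 : ℝ) ^ ((1 : ℝ) / m) - 1) := by
  classical
  obtain ⟨z₀, _, hz₀⟩ := hlam_ex
  have hlam0 : 0 ≤ lamf := hz₀ ▸ norm_nonneg z₀
  -- the polynomial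
  set P : ℂ[X] := X ^ m + ∑ i : Fin m, C (c i) * X ^ (m - 1 - (i : ℕ)) with hP
  have hdeg_sum : (∑ i : Fin m, C (c i) * X ^ (m - 1 - (i : ℕ)) : ℂ[X]).degree < m := by
    refine lt_of_le_of_lt (degree_sum_le _ _) ?_
    rw [Finset.sup_lt_iff (by exact_mod_cast WithBot.bot_lt_coe m)]
    intro i _
    refine lt_of_le_of_lt (degree_C_mul_X_pow_le _ _) ?_
    exact_mod_cast Nat.lt_of_le_of_lt (Nat.sub_le _ _) (by omega)
  have hmonic : P.Monic := monic_X_pow_add hdeg_sum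
  have hdegP : P.natDegree = m := by
    have : P.degree = m := by
      rw [hP, degree_add_eq_left_of_degree_lt (by rwa [degree_X_pow]), degree_X_pow]
    exact natDegree_eq_of_degree_eq_some this
  have hsplits : (P.map (RingHom.id ℂ)).Splits := IsAlgClosed.splits _
  have heval : ∀ z : ℂ, P.eval z = z ^ m + ∑ i : Fin m, c i * z ^ (m - 1 - (i : ℕ)) := by
    intro z; simp [hP, eval_finset_sum]
  have hroots : ∀ z ∈ (P.map (RingHom.id ℂ)).roots, ‖z‖ ≤ lamf := by
    intro z hz
    rw [Polynomial.map_id] at hz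
    have h := (mem_roots (hmonic.ne_zero)).1 hz
    rw [IsRoot, heval z] at h
    exact hlam_ub z h
  -- coefficient of P
  have hcoeff : ∀ i : Fin m, P.coeff (m - 1 - (i : ℕ)) = c i := by
    intro i
    have hi : (i : ℕ) < m := i.isLt
    rw [hP, coeff_add, coeff_X_pow, if_neg (by omega), zero_add, finset_sum_coeff]
    rw [Finset.sum_eq_single i]
    · simp [coeff_C_mul, coeff_X_pow]
    · intro j _ hj
      have hji : (j : ℕ) ≠ (i : ℕ) := fun h => hj (Fin.ext h)
      have h1 : m - 1 - (j:ℕ) ≠ m - 1 - (i:ℕ) := by have := j.isLt; omega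
      simp [coeff_C_mul, coeff_X_pow, h1, h1.symm]
    · simp
  -- bound on |c i|
  have hcbound : ∀ i : Fin m, ‖c i‖ ≤ lamf ^ ((i : ℕ) + 1) * (m.choose ((i : ℕ) + 1)) := by
    intro i
    have hi : (i : ℕ) < m := i.isLt
    have := Polynomial.coeff_le_of_roots_le (m - 1 - (i : ℕ)) hmonic hsplits hroots
    rw [Polynomial.map_id, hcoeff i, hdegP] at this
    have h1 : m - (m - 1 - (i : ℕ)) = (i : ℕ) + 1 := by omega
    have h2 : m.choose (m - 1 - (i : ℕ)) = m.choose ((i : ℕ) + 1) := by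
      have : m - 1 - (i : ℕ) = m - ((i : ℕ) + 1) := by omega
      rw [this, Nat.choose_symm (by omega)]
    rw [h1, h2] at this
    exact this
  -- key inequality : 2 r^m ≤ (lamf + r)^m
  have hkey : 2 * r ^ m ≤ (lamf + r) ^ m := by
    have hsum : r ^ m ≤ ∑ i : Fin m, lamf ^ ((i:ℕ)+1) * (m.choose ((i:ℕ)+1)) * r ^ (m - 1 - (i:ℕ)) := by
      rw [hr_root]
      refine Finset.sum_le_sum fun i _ => ?_
      exact mul_le_mul_of_nonneg_right (hcbound i) (pow_nonneg hr0 _)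
    have hbin : (lamf + r) ^ m = ∑ k ∈ Finset.range (m+1), lamf ^ k * r ^ (m - k) * (m.choose k) := by
      rw [add_pow]

    have hshift : ∑ k ∈ Finset.range (m+1), lamf ^ k * r ^ (m - k) * (m.choose k)
        = (∑ i ∈ Finset.range m, lamf ^ (i+1) * r ^ (m - (i+1)) * (m.choose (i+1))) + r ^ m := by
      rw [Finset.sum_range_succ']
      simp
    have hfin : ∑ i : Fin m, lamf ^ ((i:ℕ)+1) * (m.choose ((i:ℕ)+1)) * r ^ (m - 1 - (i:ℕ))
        = ∑ i ∈ Finset.range m, lamf ^ (i+1) * r ^ (m - (i+1)) * (m.choose (i+1)) := by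
      rw [Fin.sum_univ_eq_sum_range
        (fun k => lamf ^ (k+1) * (m.choose (k+1) : ℝ) * r ^ (m - 1 - k)) m]
      refine Finset.sum_congr rfl fun i hi => ?_
      have h : m - 1 - i = m - (i + 1) := by omega
      rw [h]; ring
    rw [hfin] at hsum
    linarith [hsum, hbin, hshift]
  -- take m-th roots
  have hm' : (m : ℝ) ≠ 0 := by positivity
  have hrp : ((2:ℝ) * r ^ m) ^ ((1:ℝ)/m) ≤ ((lamf + r) ^ m) ^ ((1:ℝ)/m) :=
    Real.rpow_le_rpow (by positivity) hkey (by positivity)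
  have hL : ((2:ℝ) * r ^ m) ^ ((1:ℝ)/m) = (2:ℝ) ^ ((1:ℝ)/m) * r := by
    rw [Real.mul_rpow (by norm_num) (by positivity), ← Real.rpow_natCast r m,
      ← Real.rpow_mul hr0]
    rw [mul_one_div, div_self hm', Real.rpow_one]
  have hR : ((lamf + r) ^ m) ^ ((1:ℝ)/m) = lamf + r := by
    rw [← Real.rpow_natCast (lamf + r) m, ← Real.rpow_mul (by positivity),
      mul_one_div, div_self hm', Real.rpow_one]
  rw [hL, hR] at hrp
  have hpos : 0 < (2:ℝ) ^ ((1:ℝ)/m) - 1 := by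
    have : 1 < (2:ℝ) ^ ((1:ℝ)/m) :=
      (Real.one_lt_rpow_iff_of_pos (by norm_num)).2 (Or.inl ⟨by norm_num, by positivity⟩)
    linarith
  rw [le_div_iff₀ hpos]
  nlinarith [hrp]
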